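/- Let U be a chi-square random variable with D degrees of freedom. Then for every x > 0, P(U - D ≥ 2√(D x) + 2x) ≤ exp(-x) and P(D - U ≥ 2√(D x)) ≤ exp(-x). -/

import Mathlib

open MeasureTheory ProbabilityTheory Real
open scoped ENNReal NNReal

lemma log_key_deriv {y : ℝ} (hy : (1:ℝ) + y ≠ 0) :
    HasDerivAt (fun u : ℝ => Real.log (1+u)) (1+y)⁻¹ y := by
  have h := (hasDerivAt_id' (x := y).const_add 1).log hy
  simpa using h

lemma log_lb {y : ℝ} (hy : 0 ≤ y) : y - y^2/2 ≤ Real.log (1+y) := by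
  have hmono : MonotoneOn (fun u : ℝ => Real.log (1+u) - (u - u^2/2)) (Set.Ici 0) := by
    apply monotoneOn_of_hasDerivWithinAt_nonneg (f' := fun u => (1+u)⁻¹ - (1 - u))
      (convex_Ici 0)
    · apply ContinuousOn.sub
      · apply ContinuousOn.log (by fun_prop)
        intro u hu
        simp only [Set.mem_Ici] at hu
        exact ne_of_gt (by linarith)
      · fun_prop
    · intro u hu
      rw [interior_Ici] at hu ⊢
      have hu' : (0:ℝ) < u := hu
      have hd : HasDerivAt (fun u : ℝ => Real.log (1+u) - (u - u^2/2))
          ((1+u)⁻¹ - (1 - u)) u := by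
        have h2 : HasDerivAt (fun u : ℝ => u - u^2/2) (1 - u) u := by
          have this : HasDerivAt (fun u : ℝ => u - u^2/2) (1 - ((2:ℕ):ℝ) * u^(2-1)/2) u :=
            (hasDerivAt_id' (x := u)).sub ((hasDerivAt_pow 2 u).div_const 2)
          convert this using 1
          simp
        exact (log_key_deriv (by linarith)).sub h2
      exact hd.hasDerivWithinAt
    · intro u hu
      rw [interior_Ici] at hu
      have hu' : (0:ℝ) < u := hu
      have h1 : (0:ℝ) < 1 + u := by linarith
      have key : (1+u)⁻¹ - (1 - u) = u^2/(1+u) := by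
        field_simp
        ring
      rw [key]
      positivity
  have := hmono (Set.self_mem_Ici) (Set.mem_Ici.mpr hy) hy
  simpa using this

lemma log_ub {y : ℝ} (hy : 0 ≤ y) : Real.log (1+y) ≤ y*(2+y)/(2*(1+y)) := by
  have hmono : MonotoneOn (fun u : ℝ => u*(2+u)/(2*(1+u)) - Real.log (1+u)) (Set.Ici 0) := by
    apply monotoneOn_of_hasDerivWithinAt_nonneg
      (f' := fun u => ((2+2*u)*(2*(1+u)) - (u*(2+u))*2)/(2*(1+u))^2 - (1+u)⁻¹)
      (convex_Ici 0)
    · apply ContinuousOn.sub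
      · apply ContinuousOn.div (by fun_prop) (by fun_prop)
        intro u hu
        simp only [Set.mem_Ici] at hu
        exact ne_of_gt (by linarith)
      · apply ContinuousOn.log (by fun_prop)
        intro u hu
        simp only [Set.mem_Ici] at hu
        exact ne_of_gt (by linarith)
    · intro u hu
      rw [interior_Ici] at hu ⊢
      have hu' : (0:ℝ) < u := hu
      have h1 : (0:ℝ) < 1 + u := by linarith
      have hq : HasDerivAt (fun u : ℝ => u*(2+u)/(2*(1+u)))
          (((2+2*u)*(2*(1+u)) - (u*(2+u))*2)/(2*(1+u))^2) u := by
        apply HasDerivAt.div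
        · have h2 : HasDerivAt (fun v : ℝ => v*(2+v)) (1*(2+u) + u*1) u :=
            (hasDerivAt_id' (x := u)).mul ((hasDerivAt_id' (x := u)).const_add 2)
          exact h2.congr_deriv (by ring)
        · have := ((hasDerivAt_id' (x := u)).const_add 1).const_mul 2
          convert this using 1
          ring
        · positivity
      exact (hq.sub (log_key_deriv (by linarith))).hasDerivWithinAt
    · intro u hu
      rw [interior_Ici] at hu
      have hu' : (0:ℝ) < u := hu
      have h1 : (0:ℝ) < 1 + u := by linarith
      rw [sub_nonneg, inv_eq_one_div, div_le_div_iff₀ (by positivity) (by positivity)]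
      nlinarith [sq_nonneg u, hu'.le]
  have := hmono (Set.self_mem_Ici) (Set.mem_Ici.mpr hy) hy
  simpa using this

lemma gauss_int {t : ℝ} (ht : t < 1/2) :
    Integrable (fun y : ℝ => Real.exp (t * y ^ 2)) (gaussianReal 0 1) ∧
    ∫ y, Real.exp (t * y ^ 2) ∂(gaussianReal 0 1) = (Real.sqrt (1 - 2*t))⁻¹ := by
  have hb : (0:ℝ) < 1/2 - t := by linarith
  have h1 : gaussianReal 0 1 = volume.withDensity (gaussianPDF 0 1) :=
    gaussianReal_of_var_ne_zero 0 one_ne_zero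
  have hpdf : ∀ y : ℝ, gaussianPDFReal 0 1 y = (Real.sqrt (2*π))⁻¹ * Real.exp (-(1/2) * y^2) := by
    intro y
    simp [gaussianPDFReal]
    ring_nf
    exact Or.inl trivial
  have h2 : gaussianPDF 0 1 = fun y => ((gaussianPDFReal 0 1 y).toNNReal : ℝ≥0∞) := by
    ext y; rw [gaussianPDF]; rfl
  have hmeasd : Measurable (fun y => (gaussianPDFReal 0 1 y).toNNReal) :=
    (measurable_gaussianPDFReal 0 1).real_toNNReal
  have hcomb : ∀ y : ℝ, (gaussianPDFReal 0 1 y).toNNReal • Real.exp (t * y ^ 2)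
      = (Real.sqrt (2*π))⁻¹ * Real.exp (-(1/2 - t) * y^2) := by
    intro y
    rw [NNReal.smul_def, Real.coe_toNNReal _ (gaussianPDFReal_nonneg 0 1 y), hpdf y,
      smul_eq_mul, mul_assoc, ← Real.exp_add]
    ring_nf
  have hint : Integrable (fun y : ℝ => (Real.sqrt (2*π))⁻¹ * Real.exp (-(1/2 - t) * y^2)) volume :=
    (integrable_exp_neg_mul_sq hb).const_mul _
  constructor
  · rw [h1, h2, integrable_withDensity_iff_integrable_smul hmeasd]
    exact hint.congr (Filter.Eventually.of_forall fun y => (hcomb y).symm)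
  · rw [h1, h2, integral_withDensity_eq_integral_smul hmeasd]
    simp_rw [hcomb]
    rw [integral_const_mul, integral_gaussian]
    rw [show π/(1/2 - t) = (2*π) * (1-2*t)⁻¹ by
      have h1' : (1:ℝ) - 2*t ≠ 0 := by linarith
      have h2' : (1:ℝ)/2 - t ≠ 0 := by linarith
      field_simp]
    have e1 : Real.sqrt (2*π*(1-2*t)⁻¹)
        = Real.sqrt 2 * Real.sqrt π * (Real.sqrt (1-2*t))⁻¹ := by
      rw [Real.sqrt_mul (by positivity), Real.sqrt_mul (by norm_num : (0:ℝ) ≤ 2), Real.sqrt_inv]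
    rw [e1, ← mul_assoc, Real.sqrt_mul (by norm_num : (0:ℝ) ≤ 2) π,
      inv_mul_cancel₀ (by positivity : Real.sqrt 2 * Real.sqrt π ≠ 0), one_mul]

lemma sum_sq_mgf (D : ℕ) {Ω : Type*} [MeasurableSpace Ω]
    (μ : Measure Ω) [IsProbabilityMeasure μ] (Z : Fin D → Ω → ℝ)
    (hmeas : ∀ i, Measurable (Z i))
    (hindep : iIndepFun Z μ)
    (hlaw : ∀ i, μ.map (Z i) = gaussianReal 0 1) {t : ℝ} (ht : t < 1/2) :
    Integrable (fun ω => Real.exp (t * ∑ i, Z i ω ^ 2)) μ ∧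
    ∫ ω, Real.exp (t * ∑ i, Z i ω ^ 2) ∂μ = ((Real.sqrt (1-2*t))⁻¹)^D := by
  set Y : Fin D → Ω → ℝ := fun i ω => Z i ω ^ 2 with hY
  have hYmeas : ∀ i, Measurable (Y i) := fun i => (hmeas i).pow_const 2
  have hYindep : iIndepFun Y μ := by
    have := hindep.comp (fun _ : Fin D => fun y : ℝ => y ^ 2)
      (fun _ => measurable_id.pow_const 2)
    exact this
  have hm : Measurable (fun y : ℝ => Real.exp (t * y ^ 2)) := by measurability
  have hint : ∀ i : Fin D, Integrable (fun ω => Real.exp (t * Y i ω)) μ := by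
    intro i
    have h0 := (gauss_int ht).1
    rw [← hlaw i] at h0
    have := (integrable_map_measure
      (hm.aestronglyMeasurable)
      (hmeas i).aemeasurable).mp h0
    exact this
  have hval : ∀ i : Fin D, mgf (Y i) μ t = (Real.sqrt (1-2*t))⁻¹ := by
    intro i
    rw [mgf]
    rw [← (gauss_int ht).2, ← hlaw i,
      integral_map (hmeas i).aemeasurable hm.aestronglyMeasurable]
  have hsum_eq : ∀ ω, (∑ i, Y i) ω = ∑ i, Z i ω ^ 2 := by
    intro ω; rw [Finset.sum_apply]
  constructor
  · have := hYindep.integrable_exp_mul_sum hYmeas (s := Finset.univ) (fun i _ => hint i)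
    exact this.congr (Filter.Eventually.of_forall fun ω => by simp only [hsum_eq])
  · have := hYindep.mgf_sum (t := t) hYmeas Finset.univ
    simp only [hval, Finset.prod_const, Finset.card_univ, Fintype.card_fin] at this
    rw [← this, mgf]
    exact integral_congr_ae (Filter.Eventually.of_forall fun ω => by simp only [hsum_eq])

theorem chi_square_tail (D : ℕ) (hD : 0 < D) {Ω : Type*} [MeasurableSpace Ω]
    (μ : Measure Ω) [IsProbabilityMeasure μ] (Z : Fin D → Ω → ℝ)
    (hmeas : ∀ i, Measurable (Z i))
    (hindep : iIndepFun Z μ)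
    (hlaw : ∀ i, μ.map (Z i) = gaussianReal 0 1) (x : ℝ) (hx : 0 < x) :
    μ {ω | (∑ i, Z i ω ^ 2) - D ≥ 2 * Real.sqrt (D * x) + 2 * x} ≤
      ENNReal.ofReal (Real.exp (-x)) ∧
    μ {ω | (D : ℝ) - ∑ i, Z i ω ^ 2 ≥ 2 * Real.sqrt (D * x)} ≤
      ENNReal.ofReal (Real.exp (-x)) := by
  have hDpos : (0:ℝ) < D := Nat.cast_pos.mpr hD
  set s : ℝ := Real.sqrt (x / D) with hs_def
  have hs : 0 < s := Real.sqrt_pos.mpr (div_pos hx hDpos)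
  have hxs : x = D * s^2 := by
    rw [hs_def, Real.sq_sqrt (div_nonneg hx.le hDpos.le)]
    field_simp
  have hsqDx : Real.sqrt (D * x) = D * s := by
    rw [show (D:ℝ) * x = (D*s)^2 by rw [hxs]; ring, Real.sqrt_sq (by positivity)]
  have h2s : (0:ℝ) < 1 + 2*s := by linarith
  have hL : Real.log (1+2*s) ≤ 2*s*(2+2*s)/(2*(1+2*s)) := log_ub (by positivity)
  have hL' : 2*s - (2*s)^2/2 ≤ Real.log (1+2*s) := log_lb (by positivity)
  set L : ℝ := Real.log (1+2*s) with hL_def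
  have hexpL : Real.exp ((1/2) * L) = Real.sqrt (1+2*s) := by
    rw [hL_def, show (1/2) * Real.log (1+2*s) = Real.log (1+2*s) / 2 by ring,
      ← Real.log_sqrt h2s.le, Real.exp_log (Real.sqrt_pos.mpr h2s)]
  constructor
  · -- upper tail
    set t : ℝ := s / (1 + 2*s) with ht_def
    have ht0 : 0 ≤ t := by positivity
    have ht : t < 1/2 := by rw [ht_def, div_lt_iff₀ h2s]; linarith
    have h1mt : 1 - 2*t = (1+2*s)⁻¹ := by
      rw [ht_def]; field_simp; ring
    have hsqrtinv : (Real.sqrt (1-2*t))⁻¹ = Real.sqrt (1+2*s) := by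
      rw [h1mt, Real.sqrt_inv, inv_inv]
    obtain ⟨hint, hval⟩ := sum_sq_mgf D μ Z hmeas hindep hlaw ht
    set X : Ω → ℝ := fun ω => (∑ i, Z i ω ^ 2) - D with hX_def
    have hXint : Integrable (fun ω => Real.exp (t * X ω)) μ := by
      have : (fun ω => Real.exp (t * X ω))
          = fun ω => Real.exp (t * ∑ i, Z i ω ^ 2) * Real.exp (-(t*D)) := by
        ext ω; rw [← Real.exp_add]; congr 1; rw [hX_def]; ring
      rw [this]; exact hint.mul_const _
    have hmgf : mgf X μ t = Real.exp (-(t*D)) * ((Real.sqrt (1-2*t))⁻¹)^D := by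
      rw [mgf]
      have : (fun ω => Real.exp (t * X ω))
          = fun ω => Real.exp (t * ∑ i, Z i ω ^ 2) * Real.exp (-(t*D)) := by
        ext ω; rw [← Real.exp_add]; congr 1; rw [hX_def]; ring
      rw [this, integral_mul_const, hval, mul_comm]
    have hcher := measure_ge_le_exp_mul_mgf (X := X) (μ := μ)
      (2 * Real.sqrt (D * x) + 2 * x) ht0 hXint
    have hbound : Real.exp (-t * (2 * Real.sqrt (D * x) + 2 * x)) * mgf X μ t
        ≤ Real.exp (-x) := by
      rw [hmgf, hsqrtinv, ← hexpL, ← Real.exp_nat_mul, ← Real.exp_add, ← Real.exp_add,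
        Real.exp_le_exp, hsqDx, hxs]
      have hDL : (D:ℝ) * ((1/2) * L) ≤ (D:ℝ) * ((1/2) * (2*s*(2+2*s)/(2*(1+2*s)))) := by
        apply mul_le_mul_of_nonneg_left _ hDpos.le
        apply mul_le_mul_of_nonneg_left hL (by norm_num)
      have heq : -(s/(1+2*s)) * (2 * ((D:ℝ)*s) + 2 * ((D:ℝ)*s^2)) + (-((s/(1+2*s))*(D:ℝ))
          + (D:ℝ) * ((1/2) * (2*s*(2+2*s)/(2*(1+2*s))))) = -((D:ℝ)*s^2) := by
        field_simp
        ring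
      rw [ht_def]
      linarith [hDL, heq]
    calc μ {ω | (∑ i, Z i ω ^ 2) - D ≥ 2 * Real.sqrt (D * x) + 2 * x}
        = ENNReal.ofReal (μ {ω | 2 * Real.sqrt (D * x) + 2 * x ≤ X ω}).toReal := by
          rw [ENNReal.ofReal_toReal (measure_ne_top μ _)]
      _ ≤ ENNReal.ofReal (Real.exp (-x)) :=
          ENNReal.ofReal_le_ofReal (hcher.trans hbound)
  · -- lower tail
    have htneg : -s < 1/2 := by linarith
    obtain ⟨hint, hval⟩ := sum_sq_mgf D μ Z hmeas hindep hlaw htneg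
    have h1mt : 1 - 2*(-s) = 1 + 2*s := by ring
    set X : Ω → ℝ := fun ω => (D:ℝ) - ∑ i, Z i ω ^ 2 with hX_def
    have hXint : Integrable (fun ω => Real.exp (s * X ω)) μ := by
      have : (fun ω => Real.exp (s * X ω))
          = fun ω => Real.exp ((-s) * ∑ i, Z i ω ^ 2) * Real.exp (s*D) := by
        ext ω; rw [← Real.exp_add]; congr 1; rw [hX_def]; ring
      rw [this]; exact hint.mul_const _
    have hmgf : mgf X μ s = Real.exp (s*D) * ((Real.sqrt (1+2*s))⁻¹)^D := by
      rw [mgf]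
      have : (fun ω => Real.exp (s * X ω))
          = fun ω => Real.exp ((-s) * ∑ i, Z i ω ^ 2) * Real.exp (s*D) := by
        ext ω; rw [← Real.exp_add]; congr 1; rw [hX_def]; ring
      rw [this, integral_mul_const, hval, h1mt, mul_comm]
    have hcher := measure_ge_le_exp_mul_mgf (X := X) (μ := μ)
      (2 * Real.sqrt (D * x)) hs.le hXint
    have hexpL' : Real.exp (-((1/2) * L)) = (Real.sqrt (1+2*s))⁻¹ := by
      rw [Real.exp_neg, hexpL]
    have hbound : Real.exp (-s * (2 * Real.sqrt (D * x))) * mgf X μ s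
        ≤ Real.exp (-x) := by
      rw [hmgf, ← hexpL', ← Real.exp_nat_mul, ← Real.exp_add, ← Real.exp_add,
        Real.exp_le_exp, hsqDx, hxs]
      have hDL : (D:ℝ) * (-((1/2) * L)) ≤ (D:ℝ) * (-((1/2) * (2*s - (2*s)^2/2))) := by
        apply mul_le_mul_of_nonneg_left _ hDpos.le
        apply neg_le_neg
        apply mul_le_mul_of_nonneg_left hL' (by norm_num)
      have heq : -s * (2 * ((D:ℝ)*s)) + (s*(D:ℝ) + (D:ℝ) * (-((1/2) * (2*s - (2*s)^2/2))))
          = -((D:ℝ)*s^2) := by ring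
      linarith [hDL, heq]
    calc μ {ω | (D : ℝ) - ∑ i, Z i ω ^ 2 ≥ 2 * Real.sqrt (D * x)}
        = ENNReal.ofReal (μ {ω | 2 * Real.sqrt (D * x) ≤ X ω}).toReal := by
          rw [ENNReal.ofReal_toReal (measure_ne_top μ _)]
      _ ≤ ENNReal.ofReal (Real.exp (-x)) :=
          ENNReal.ofReal_le_ofReal (hcher.trans hbound)
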